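/- arXiv:1802.00556 — 3 statements merged into one kernel-verified Lean document; each statement's English description precedes it below -/
import Mathlib

section
/- For every odd positive integer v, there exist integers k₂, k₃, k₄ with 0 ≤ k₄ ≤ k₃ ≤ k₂ ≤ (v−1)/2 such that (v − 2k₂)² + (v − 2k₃)² + (v − 2k₄)² = 4v − 1. -/
set_option maxHeartbeats 1000000

/-- Binary quadratic form with Gram matrix [[a, c], [c, b]]. -/
def BQ (a b c x y : ℤ) : ℤ := a*x^2 + b*y^2 + 2*c*x*y

lemma bq_min_exists (a b c : ℤ)
    (hpos : ∀ x y : ℤ, ¬(x = 0 ∧ y = 0) → 0 < BQ a b c x y) :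
    ∃ m x0 y0 : ℤ, ¬(x0 = 0 ∧ y0 = 0) ∧ BQ a b c x0 y0 = m ∧
      ∀ x y : ℤ, ¬(x = 0 ∧ y = 0) → m ≤ BQ a b c x y := by
  obtain ⟨m, ⟨x0, y0, hne, hval⟩, hleast⟩ :=
    Int.exists_least_of_bdd (P := fun t => ∃ x y : ℤ, ¬(x = 0 ∧ y = 0) ∧ BQ a b c x y = t)
      ⟨0, by rintro t ⟨x, y, hne, rfl⟩; exact (hpos x y hne).le⟩
      ⟨BQ a b c 1 0, 1, 0, by simp, rfl⟩
  exact ⟨m, x0, y0, hne, hval, fun x y hne' => hleast _ ⟨x, y, hne', rfl⟩⟩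

/-- round: find t with |c - t*a| ≤ a/2 -/
lemma exists_round (a c : ℤ) (ha : 0 < a) :
    ∃ t : ℤ, -a ≤ 2*(c - t*a) ∧ 2*(c - t*a) ≤ a := by
  obtain ⟨t, r, hr0, hra, hctr⟩ : ∃ t r : ℤ, 0 ≤ r ∧ r < a ∧ c = a*t + r :=
    ⟨c/a, c%a, Int.emod_nonneg c ha.ne', Int.emod_lt_of_pos c ha,
      (Int.mul_ediv_add_emod c a).symm⟩
  rcases le_or_gt (2*r) a with h | h
  · refine ⟨t, by nlinarith, by nlinarith⟩
  · refine ⟨t+1, by nlinarith, by nlinarith⟩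

lemma bezout2 (x y : ℤ) (h : Int.gcd x y = 1) : ∃ p q : ℤ, x * q - y * p = 1 := by
  have := Int.gcd_eq_gcd_ab x y
  exact ⟨-(Int.gcdB x y), Int.gcdA x y, by rw [h] at this; push_cast at this; linarith⟩

lemma bq_min_primitive (a b c m x0 y0 : ℤ)
    (hne : ¬(x0 = 0 ∧ y0 = 0)) (hval : BQ a b c x0 y0 = m)
    (hmin : ∀ x y : ℤ, ¬(x = 0 ∧ y = 0) → m ≤ BQ a b c x y)
    (hm : 0 < m) :
    Int.gcd x0 y0 = 1 := by
  obtain ⟨x1, hx1⟩ := (Int.gcd_dvd_left x0 y0 : (Int.gcd x0 y0 : ℤ) ∣ x0)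
  obtain ⟨y1, hy1⟩ := (Int.gcd_dvd_right x0 y0 : (Int.gcd x0 y0 : ℤ) ∣ y0)
  set g : ℕ := Int.gcd x0 y0 with hg
  have hg0 : g ≠ 0 := by
    rw [hg, Ne, Int.gcd_eq_zero_iff]
    tauto
  have hne1 : ¬(x1 = 0 ∧ y1 = 0) := by
    rintro ⟨rfl, rfl⟩
    simp at hx1 hy1
    tauto
  have hval1 : BQ a b c x0 y0 = (g:ℤ)^2 * BQ a b c x1 y1 := by
    rw [hx1, hy1]; unfold BQ; ring
  have h1 : m ≤ BQ a b c x1 y1 := hmin x1 y1 hne1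
  have h2 : (g:ℤ)^2 * m ≤ (g:ℤ)^2 * BQ a b c x1 y1 := by
    apply mul_le_mul_of_nonneg_left h1 (by positivity)
  have hg1 : (g:ℤ)^2 ≤ 1 := by nlinarith [hval1, hval, h2]
  have hg1' : g^2 ≤ 1 := by exact_mod_cast hg1
  have : g = 1 := by
    rcases Nat.lt_or_ge g 2 with h | h
    · omega
    · nlinarith
  rwa [hg] at this

/-- A positive-definite integral binary form's min `m` satisfies `3m² ≤ 4 det`,
and moreover if det = 1 then the form is a sum of two squares of linear forms. -/
theorem bq_reduction (a b c : ℤ)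
    (hpos : ∀ x y : ℤ, ¬(x = 0 ∧ y = 0) → 0 < BQ a b c x y) :
    ∃ m u0 v0 : ℤ, ¬(u0 = 0 ∧ v0 = 0) ∧ BQ a b c u0 v0 = m ∧ 0 < m ∧
      (∀ x y : ℤ, ¬(x = 0 ∧ y = 0) → m ≤ BQ a b c x y) ∧
      3 * m^2 ≤ 4 * (a*b - c^2) ∧
      (a*b - c^2 = 1 → ∃ p q r s : ℤ, ∀ x y : ℤ,
        BQ a b c x y = (p*x + q*y)^2 + (r*x + s*y)^2) := by
  obtain ⟨m, x0, y0, hne, hval, hmin⟩ := bq_min_exists a b c hpos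
  have hm : 0 < m := hval ▸ hpos x0 y0 hne
  have hprim := bq_min_primitive a b c m x0 y0 hne hval hmin hm
  obtain ⟨p, q, hbez⟩ := bezout2 x0 y0 hprim
  -- change of basis: (x, y) = (x0 X + p Y, y0 X + q Y)
  have hsub : ∀ X Y : ℤ, BQ a b c (x0*X + p*Y) (y0*X + q*Y) =
      BQ m (BQ a b c p q) (a*x0*p + b*y0*q + c*(x0*q + y0*p)) X Y := by
    intro X Y
    rw [← hval]
    unfold BQ; ring
  have hdet1 : m * (BQ a b c p q) - (a*x0*p + b*y0*q + c*(x0*q + y0*p))^2 = a*b - c^2 := by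
    have h0 : m * (BQ a b c p q) - (a*x0*p + b*y0*q + c*(x0*q + y0*p))^2
        = (a*b - c^2) * (x0*q - y0*p)^2 := by
      rw [← hval]; unfold BQ; ring
    rw [h0, hbez]; ring
  obtain ⟨t, ht1, ht2⟩ := exists_round m (a*x0*p + b*y0*q + c*(x0*q + y0*p)) hm
  have hb2ge : m ≤ BQ m (BQ a b c p q) (a*x0*p + b*y0*q + c*(x0*q + y0*p)) (-t) 1 := by
    rw [← hsub]
    apply hmin
    rintro ⟨h1, h2⟩
    have h3 : x0 * q - y0 * p = x0*(y0 * -t + q*1) - y0*(x0 * -t + p*1) := by ring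
    rw [h1, h2, hbez] at h3
    simp at h3
  have hbound : 3 * m^2 ≤ 4 * (a*b - c^2) := by
    have hexp : m * (BQ m (BQ a b c p q) (a*x0*p + b*y0*q + c*(x0*q + y0*p)) (-t) 1)
        - ((a*x0*p + b*y0*q + c*(x0*q + y0*p)) - t*m)^2
        = m * (BQ a b c p q) - (a*x0*p + b*y0*q + c*(x0*q + y0*p))^2 := by
      unfold BQ; ring
    nlinarith [hdet1, hb2ge, hm, ht1, ht2, hexp]
  refine ⟨m, x0, y0, hne, hval, hm, hmin, hbound, fun hdet => ?_⟩
  have hm1 : m = 1 := by nlinarith [hbound, hm]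
  have hb1c1 : BQ a b c p q - (a*x0*p + b*y0*q + c*(x0*q + y0*p))^2 = 1 := by
    rw [hdet] at hdet1
    rw [hm1] at hdet1
    linarith
  refine ⟨q - (a*x0*p + b*y0*q + c*(x0*q + y0*p))*y0,
          -p + (a*x0*p + b*y0*q + c*(x0*q + y0*p))*x0, -y0, x0, fun x y => ?_⟩
  have hid := hsub (q*x - p*y) (-y0*x + x0*y)
  have hx : x0*(q*x - p*y) + p*(-y0*x + x0*y) = x := by
    have h0 : x0*(q*x - p*y) + p*(-y0*x + x0*y) = (x0*q - y0*p) * x := by ring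
    rw [h0, hbez]; ring
  have hy : y0*(q*x - p*y) + q*(-y0*x + x0*y) = y := by
    have h0 : y0*(q*x - p*y) + q*(-y0*x + x0*y) = (x0*q - y0*p) * y := by ring
    rw [h0, hbez]; ring
  rw [hx, hy] at hid
  rw [hid, hm1]
  have hexp2 : ∀ X Y : ℤ, BQ 1 (BQ a b c p q) (a*x0*p + b*y0*q + c*(x0*q + y0*p)) X Y
      = (X + (a*x0*p + b*y0*q + c*(x0*q + y0*p))*Y)^2
        + (BQ a b c p q - (a*x0*p + b*y0*q + c*(x0*q + y0*p))^2) * Y^2 := by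
    intro X Y; unfold BQ; ring
  rw [hexp2, hb1c1]
  ring

/-- Ternary quadratic form with Gram matrix [[a,d,e],[d,b,f],[e,f,c]]. -/
def TQ (a b c d e f x y z : ℤ) : ℤ :=
  a*x^2 + b*y^2 + c*z^2 + 2*d*x*y + 2*e*x*z + 2*f*y*z

/-- Associated bilinear form. -/
def TB (a b c d e f x y z x' y' z' : ℤ) : ℤ :=
  a*x*x' + b*y*y' + c*z*z' + d*(x*y' + y*x') + e*(x*z' + z*x') + f*(y*z' + z*y')

def tdet (a b c d e f : ℤ) : ℤ := a*b*c + 2*d*e*f - a*f^2 - b*e^2 - c*d^2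

lemma tq_subst (a b c d e f u1 u2 u3 v1 v2 v3 w1 w2 w3 X Y Z : ℤ) :
    TQ a b c d e f (u1*X + v1*Y + w1*Z) (u2*X + v2*Y + w2*Z) (u3*X + v3*Y + w3*Z)
      = TQ (TQ a b c d e f u1 u2 u3) (TQ a b c d e f v1 v2 v3) (TQ a b c d e f w1 w2 w3)
          (TB a b c d e f u1 u2 u3 v1 v2 v3) (TB a b c d e f u1 u2 u3 w1 w2 w3)
          (TB a b c d e f v1 v2 v3 w1 w2 w3) X Y Z := by
  unfold TQ TB; ring

lemma tdet_subst (a b c d e f u1 u2 u3 v1 v2 v3 w1 w2 w3 : ℤ) :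
    tdet (TQ a b c d e f u1 u2 u3) (TQ a b c d e f v1 v2 v3) (TQ a b c d e f w1 w2 w3)
          (TB a b c d e f u1 u2 u3 v1 v2 v3) (TB a b c d e f u1 u2 u3 w1 w2 w3)
          (TB a b c d e f v1 v2 v3 w1 w2 w3)
      = (u1*(v2*w3 - v3*w2) - v1*(u2*w3 - u3*w2) + w1*(u2*v3 - u3*v2))^2
          * tdet a b c d e f := by
  unfold TQ TB tdet; ring

/-- extend a primitive vector in ℤ³ to a basis with determinant 1 -/
lemma basis_ext (x0 y0 z0 : ℤ) (h : Int.gcd x0 (Int.gcd y0 z0 : ℤ) = 1) :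
    ∃ v1 v2 v3 w1 w2 w3 : ℤ,
      x0*(v2*w3 - v3*w2) - v1*(y0*w3 - z0*w2) + w1*(y0*v3 - z0*v2) = 1 := by
  have key : ∃ g A B u w x1 y1 : ℤ,
      x0 = g*x1 ∧ y0 = g*y1 ∧ x1*A + y1*B = 1 ∧ g*u + z0*w = 1 := by
    rcases eq_or_ne (Int.gcd x0 y0) 0 with hg | hg
    · rw [Int.gcd_eq_zero_iff] at hg
      obtain ⟨rfl, rfl⟩ := hg
      have hz : (z0.natAbs : ℤ) = 1 := by
        have h0 : z0.natAbs = 1 := by simpa [Int.natAbs_abs] using h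
        exact_mod_cast h0
      rcases Int.natAbs_eq z0 with h1 | h1
      · exact ⟨0, 0, 1, 0, 1, 1, 1, by ring, by ring, by ring, by rw [h1, hz]; ring⟩
      · exact ⟨0, 0, 1, 0, -1, 1, 1, by ring, by ring, by ring, by rw [h1, hz]; ring⟩
    · set G : ℤ := (Int.gcd x0 y0 : ℤ) with hG
      set A : ℤ := Int.gcdA x0 y0 with hA
      set B : ℤ := Int.gcdB x0 y0 with hB
      have hgz : Int.gcd G z0 = 1 := by rw [hG, Int.gcd_assoc]; exact h
      obtain ⟨x1, hx1⟩ : ∃ x1, x0 = G * x1 := (Int.gcd_dvd_left x0 y0 : G ∣ x0)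
      obtain ⟨y1, hy1⟩ : ∃ y1, y0 = G * y1 := (Int.gcd_dvd_right x0 y0 : G ∣ y0)
      have hb : G = x0 * A + y0 * B := Int.gcd_eq_gcd_ab x0 y0
      have hGne : G ≠ 0 := by rw [hG]; exact_mod_cast hg
      have hbez1 : x1 * A + y1 * B = 1 := by
        apply mul_left_cancel₀ hGne
        rw [mul_one]
        calc G * (x1 * A + y1 * B) = x0 * A + y0 * B := by rw [hx1, hy1]; ring
          _ = G := hb.symm
      have hbez2 : G * Int.gcdA G z0 + z0 * Int.gcdB G z0 = 1 := by
        have hb2 := Int.gcd_eq_gcd_ab G z0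
        rw [hgz] at hb2
        push_cast at hb2
        linarith
      exact ⟨G, A, B, Int.gcdA G z0, Int.gcdB G z0, x1, y1, hx1, hy1, hbez1, hbez2⟩
  obtain ⟨g, A, B, u, w, x1, y1, hx1, hy1, hbez1, hbez2⟩ := key
  refine ⟨-B, A, 0, -w*x1, -w*y1, u, ?_⟩
  rw [hx1, hy1]
  linear_combination (g*u + z0*w) * hbez1 + hbez2

lemma tq_min_exists (a b c d e f : ℤ)
    (hpos : ∀ x y z : ℤ, ¬(x = 0 ∧ y = 0 ∧ z = 0) → 0 < TQ a b c d e f x y z) :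
    ∃ m x0 y0 z0 : ℤ, ¬(x0 = 0 ∧ y0 = 0 ∧ z0 = 0) ∧ TQ a b c d e f x0 y0 z0 = m ∧
      ∀ x y z : ℤ, ¬(x = 0 ∧ y = 0 ∧ z = 0) → m ≤ TQ a b c d e f x y z := by
  obtain ⟨m, ⟨x0, y0, z0, hne, hval⟩, hleast⟩ :=
    Int.exists_least_of_bdd
      (P := fun t => ∃ x y z : ℤ, ¬(x = 0 ∧ y = 0 ∧ z = 0) ∧ TQ a b c d e f x y z = t)
      ⟨0, by rintro t ⟨x, y, z, hne, rfl⟩; exact (hpos x y z hne).le⟩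
      ⟨TQ a b c d e f 1 0 0, 1, 0, 0, by simp, rfl⟩
  exact ⟨m, x0, y0, z0, hne, hval, fun x y z hne' => hleast _ ⟨x, y, z, hne', rfl⟩⟩

lemma tq_min_primitive (a b c d e f m x0 y0 z0 : ℤ)
    (hne : ¬(x0 = 0 ∧ y0 = 0 ∧ z0 = 0)) (hval : TQ a b c d e f x0 y0 z0 = m)
    (hmin : ∀ x y z : ℤ, ¬(x = 0 ∧ y = 0 ∧ z = 0) → m ≤ TQ a b c d e f x y z)
    (hm : 0 < m) :
    Int.gcd x0 (Int.gcd y0 z0 : ℤ) = 1 := by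
  set g : ℕ := Int.gcd x0 (Int.gcd y0 z0 : ℤ) with hg
  obtain ⟨x1, hx1⟩ : (g:ℤ) ∣ x0 := Int.gcd_dvd_left _ _
  obtain ⟨y1, hy1⟩ : (g:ℤ) ∣ y0 :=
    dvd_trans (Int.gcd_dvd_right _ _) (Int.gcd_dvd_left _ _ : (Int.gcd y0 z0 : ℤ) ∣ y0)
  obtain ⟨z1, hz1⟩ : (g:ℤ) ∣ z0 :=
    dvd_trans (Int.gcd_dvd_right _ _) (Int.gcd_dvd_right _ _ : (Int.gcd y0 z0 : ℤ) ∣ z0)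
  have hg0 : g ≠ 0 := by
    rw [hg, Ne, Int.gcd_eq_zero_iff]
    intro ⟨h1, h2⟩
    rw [Int.natCast_eq_zero, Int.gcd_eq_zero_iff] at h2
    tauto
  have hne1 : ¬(x1 = 0 ∧ y1 = 0 ∧ z1 = 0) := by
    rintro ⟨rfl, rfl, rfl⟩
    simp at hx1 hy1 hz1
    tauto
  have hval1 : TQ a b c d e f x0 y0 z0 = (g:ℤ)^2 * TQ a b c d e f x1 y1 z1 := by
    rw [hx1, hy1, hz1]; unfold TQ; ring
  have h1 : m ≤ TQ a b c d e f x1 y1 z1 := hmin x1 y1 z1 hne1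
  have h2 : (g:ℤ)^2 * m ≤ (g:ℤ)^2 * TQ a b c d e f x1 y1 z1 :=
    mul_le_mul_of_nonneg_left h1 (by positivity)
  have hg1 : (g:ℤ)^2 ≤ 1 := by nlinarith [hval1, hval, h2]
  have hg1' : g^2 ≤ 1 := by exact_mod_cast hg1
  have : g = 1 := by nlinarith [Nat.one_le_iff_ne_zero.mpr hg0]
  rwa [hg] at this

theorem tq_sum_three_squares (a b c d e f n : ℤ)
    (hpos : ∀ x y z : ℤ, ¬(x = 0 ∧ y = 0 ∧ z = 0) → 0 < TQ a b c d e f x y z)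
    (hdet : tdet a b c d e f = 1)
    (hn : ∃ x y z : ℤ, TQ a b c d e f x y z = n) :
    ∃ r s t : ℤ, n = r^2 + s^2 + t^2 := by
  obtain ⟨m, x0, y0, z0, hne, hval, hmin⟩ := tq_min_exists a b c d e f hpos
  have hm : 0 < m := hval ▸ hpos x0 y0 z0 hne
  have hprim := tq_min_primitive a b c d e f m x0 y0 z0 hne hval hmin hm
  obtain ⟨v1, v2, v3, w1, w2, w3, hdetU⟩ := basis_ext x0 y0 z0 hprim
  obtain ⟨A, hA⟩ : ∃ A, TQ a b c d e f x0 y0 z0 = A := ⟨_, rfl⟩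
  obtain ⟨B, hB⟩ : ∃ B, TQ a b c d e f v1 v2 v3 = B := ⟨_, rfl⟩
  obtain ⟨C, hC⟩ : ∃ C, TQ a b c d e f w1 w2 w3 = C := ⟨_, rfl⟩
  obtain ⟨D, hD⟩ : ∃ D, TB a b c d e f x0 y0 z0 v1 v2 v3 = D := ⟨_, rfl⟩
  obtain ⟨E, hE⟩ : ∃ E, TB a b c d e f x0 y0 z0 w1 w2 w3 = E := ⟨_, rfl⟩
  obtain ⟨F, hF⟩ : ∃ F, TB a b c d e f v1 v2 v3 w1 w2 w3 = F := ⟨_, rfl⟩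
  have hAm : A = m := hA ▸ hval
  have hsub : ∀ X Y Z : ℤ, TQ a b c d e f (x0*X + v1*Y + w1*Z) (y0*X + v2*Y + w2*Z)
      (z0*X + v3*Y + w3*Z) = TQ A B C D E F X Y Z := by
    intro X Y Z
    rw [← hA, ← hB, ← hC, ← hD, ← hE, ← hF]
    exact tq_subst a b c d e f x0 y0 z0 v1 v2 v3 w1 w2 w3 X Y Z
  have hdet2 : tdet A B C D E F = 1 := by
    rw [← hA, ← hB, ← hC, ← hD, ← hE, ← hF, tdet_subst, hdetU, hdet]
    ring
  -- images of nonzero vectors are nonzero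
  have himg : ∀ X Y Z : ℤ, ¬(X = 0 ∧ Y = 0 ∧ Z = 0) →
      ¬(x0*X + v1*Y + w1*Z = 0 ∧ y0*X + v2*Y + w2*Z = 0 ∧ z0*X + v3*Y + w3*Z = 0) := by
    intro X Y Z hXYZ ⟨h1, h2, h3⟩
    apply hXYZ
    refine ⟨?_, ?_, ?_⟩
    · have hX : X = (v2*w3 - v3*w2)*(x0*X + v1*Y + w1*Z)
          - (v1*w3 - v3*w1)*(y0*X + v2*Y + w2*Z)
          + (v1*w2 - v2*w1)*(z0*X + v3*Y + w3*Z) := by linear_combination (-X) * hdetU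
      rw [h1, h2, h3] at hX
      simpa using hX
    · have hY : Y = -(y0*w3 - w2*z0)*(x0*X + v1*Y + w1*Z)
          + (x0*w3 - w1*z0)*(y0*X + v2*Y + w2*Z)
          - (x0*w2 - w1*y0)*(z0*X + v3*Y + w3*Z) := by linear_combination (-Y) * hdetU
      rw [h1, h2, h3] at hY
      simpa using hY
    · have hZ : Z = (y0*v3 - v2*z0)*(x0*X + v1*Y + w1*Z)
          - (x0*v3 - v1*z0)*(y0*X + v2*Y + w2*Z)
          + (x0*v2 - v1*y0)*(z0*X + v3*Y + w3*Z) := by linear_combination (-Z) * hdetU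
      rw [h1, h2, h3] at hZ
      simpa using hZ
  have hpos2 : ∀ X Y Z : ℤ, ¬(X = 0 ∧ Y = 0 ∧ Z = 0) → 0 < TQ A B C D E F X Y Z := by
    intro X Y Z hXYZ
    rw [← hsub]
    exact hpos _ _ _ (himg X Y Z hXYZ)
  have hmin2 : ∀ X Y Z : ℤ, ¬(X = 0 ∧ Y = 0 ∧ Z = 0) → m ≤ TQ A B C D E F X Y Z := by
    intro X Y Z hXYZ
    rw [← hsub]
    exact hmin _ _ _ (himg X Y Z hXYZ)
  -- completion of the square: binary form
  have I1 : ∀ x y z : ℤ, A * TQ A B C D E F x y z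
      = (A*x + D*y + E*z)^2 + BQ (A*B - D^2) (A*C - E^2) (A*F - D*E) y z := by
    intro x y z; unfold TQ BQ; ring
  have I2 : (A*B - D^2)*(A*C - E^2) - (A*F - D*E)^2 = A * tdet A B C D E F := by
    unfold tdet; ring
  have hApos : 0 < A := hAm ▸ hm
  have hbpos : ∀ y z : ℤ, ¬(y = 0 ∧ z = 0) → 0 < BQ (A*B - D^2) (A*C - E^2) (A*F - D*E) y z := by
    intro y z hyz
    have hid : A * TQ A B C D E F (-(D*y+E*z)) (A*y) (A*z)
        = A^2 * BQ (A*B - D^2) (A*C - E^2) (A*F - D*E) y z := by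
      unfold TQ BQ; ring
    have harg : ¬((-(D*y+E*z)) = 0 ∧ A*y = 0 ∧ A*z = 0) := by
      rintro ⟨h1, h2, h3⟩
      have hy0 : y = 0 := by
        rcases mul_eq_zero.mp h2 with h' | h'
        · exact absurd h' hApos.ne'
        · exact h'
      have hz0 : z = 0 := by
        rcases mul_eq_zero.mp h3 with h' | h'
        · exact absurd h' hApos.ne'
        · exact h'
      exact hyz ⟨hy0, hz0⟩
    have hTQpos := hpos2 _ _ _ harg
    have h0 : 0 < A * TQ A B C D E F (-(D*y+E*z)) (A*y) (A*z) := mul_pos hApos hTQpos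
    rw [hid] at h0
    by_contra hBQ
    push_neg at hBQ
    have := mul_nonpos_of_nonneg_of_nonpos (sq_nonneg A) hBQ
    nlinarith [h0, this]
  obtain ⟨mu, u0, v0, hneu, hvalu, hmu, hminu, hboundu, hsplitu⟩ :=
    bq_reduction (A*B - D^2) (A*C - E^2) (A*F - D*E) hbpos
  have hboundu' : 3 * mu^2 ≤ 4 * A := by
    rw [I2, hdet2] at hboundu
    linarith
  -- lower bound for mu
  obtain ⟨t, ht1, ht2⟩ := exists_round A (D*u0 + E*v0) hApos
  have hmlow : m ≤ TQ A B C D E F (-t) u0 v0 := by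
    apply hmin2
    rintro ⟨h1, h2, h3⟩
    exact hneu ⟨h2, h3⟩
  have hmu4 : 3 * m^2 ≤ 4 * mu := by
    obtain ⟨R, hRdef⟩ : ∃ R, D*u0 + E*v0 - t*A = R := ⟨_, rfl⟩
    have hexp : A * TQ A B C D E F (-t) u0 v0 = R^2 + mu := by
      rw [← hRdef, ← hvalu]; unfold TQ BQ; ring
    have hR4 : 4*R^2 ≤ A^2 := by rw [← hRdef]; nlinarith [ht1, ht2]
    have hAc : A * m ≤ A * TQ A B C D E F (-t) u0 v0 :=
      mul_le_mul_of_nonneg_left hmlow hApos.le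
    rw [hexp] at hAc
    rw [hAm] at hAc hR4
    linarith [hAc, hR4]
  have hboundm : 3 * mu^2 ≤ 4 * m := by rw [hAm] at hboundu'; exact hboundu'
  have hm1 : m = 1 := by
    have h9 : 9*m^4 ≤ 16*mu^2 := by nlinarith [hmu4, hm, hmu]
    have h64 : 27*m^4 ≤ 64*m := by linarith [hboundm, h9]
    by_contra hne1
    have h2le : 2 ≤ m := by omega
    nlinarith [h64, h2le]
  have hA1 : A = 1 := hAm.trans hm1
  -- split off the square
  rw [hA1] at hdet2
  have I3 : ∀ x y z : ℤ, TQ 1 B C D E F x y z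
      = (x + D*y + E*z)^2 + BQ (B - D^2) (C - E^2) (F - D*E) y z := by
    intro x y z; unfold TQ BQ; ring
  have det3 : (B - D^2)*(C - E^2) - (F - D*E)^2 = 1 := by
    rw [← hdet2]; unfold tdet; ring
  have hbpos3 : ∀ y z : ℤ, ¬(y = 0 ∧ z = 0) → 0 < BQ (B - D^2) (C - E^2) (F - D*E) y z := by
    intro y z hyz
    have hid := I3 (-(D*y+E*z)) y z
    have harg : ¬((-(D*y+E*z)) = 0 ∧ y = 0 ∧ z = 0) := by tauto
    have hTQ3 := hpos2 (-(D*y+E*z)) y z harg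
    rw [hA1] at hTQ3
    nlinarith [hid, hTQ3]
  obtain ⟨mu3, u3, v3', hneu3, hvalu3, hmu3, hminu3, hboundu3, hsplitu3⟩ :=
    bq_reduction (B - D^2) (C - E^2) (F - D*E) hbpos3
  obtain ⟨p, q, r, s, hpqrs⟩ := hsplitu3 det3
  -- final: transfer the witness
  obtain ⟨xw, yw, zw, hw⟩ := hn
  obtain ⟨Xw, hXw⟩ : ∃ X, (v2*w3 - v3*w2)*xw - (v1*w3 - v3*w1)*yw + (v1*w2 - v2*w1)*zw = X :=
    ⟨_, rfl⟩
  obtain ⟨Yw, hYw⟩ : ∃ Y, -(y0*w3 - w2*z0)*xw + (x0*w3 - w1*z0)*yw - (x0*w2 - w1*y0)*zw = Y :=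
    ⟨_, rfl⟩
  obtain ⟨Zw, hZw⟩ : ∃ Z, (y0*v3 - v2*z0)*xw - (x0*v3 - v1*z0)*yw + (x0*v2 - v1*y0)*zw = Z :=
    ⟨_, rfl⟩
  have hxw : x0*Xw + v1*Yw + w1*Zw = xw := by
    rw [← hXw, ← hYw, ← hZw]; linear_combination xw * hdetU
  have hyw : y0*Xw + v2*Yw + w2*Zw = yw := by
    rw [← hXw, ← hYw, ← hZw]; linear_combination yw * hdetU
  have hzw : z0*Xw + v3*Yw + w3*Zw = zw := by
    rw [← hXw, ← hYw, ← hZw]; linear_combination zw * hdetU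
  have h5 : TQ A B C D E F Xw Yw Zw = n := by
    have h6 := hsub Xw Yw Zw
    rw [hxw, hyw, hzw] at h6
    rw [← h6, hw]
  rw [hA1] at h5
  rw [I3, hpqrs] at h5
  exact ⟨Xw + D*Yw + E*Zw, p*Yw + q*Zw, r*Yw + s*Zw, by linarith [h5]⟩

lemma tq_posdef_of_minors (a b c d e f : ℤ) (ha : 0 < a) (hab : 0 < a*b - d^2)
    (hdet : 0 < tdet a b c d e f) :
    ∀ x y z : ℤ, ¬(x = 0 ∧ y = 0 ∧ z = 0) → 0 < TQ a b c d e f x y z := by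
  intro x y z hne
  have key : (a*b - d^2) * (a * TQ a b c d e f x y z)
      = (a*b - d^2) * (a*x + d*y + e*z)^2 + ((a*b - d^2)*y + (a*f - d*e)*z)^2
        + a * tdet a b c d e f * z^2 := by
    unfold TQ tdet; ring
  have hpos' : 0 < (a*b - d^2) * (a * TQ a b c d e f x y z) := by
    rw [key]
    rcases eq_or_ne z 0 with hz | hz
    · rcases eq_or_ne y 0 with hy | hy
      · have hx : x ≠ 0 := by tauto
        have h1 : 0 < (a*b - d^2) * (a*x + d*y + e*z)^2 := by
          subst hz; subst hy
          have : a*x + d*0 + e*0 = a*x := by ring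
          rw [this]
          have : a*x ≠ 0 := mul_ne_zero ha.ne' hx
          positivity
        nlinarith [sq_nonneg ((a*b - d^2)*y + (a*f - d*e)*z), sq_nonneg z, hdet.le, ha.le,
          mul_nonneg (mul_nonneg ha.le hdet.le) (sq_nonneg z)]
      · have h2 : 0 < ((a*b - d^2)*y + (a*f - d*e)*z)^2 := by
          subst hz
          have : (a*b - d^2)*y + (a*f - d*e)*0 = (a*b - d^2)*y := by ring
          rw [this]
          have : (a*b - d^2)*y ≠ 0 := mul_ne_zero hab.ne' hy
          positivity
        nlinarith [mul_nonneg hab.le (sq_nonneg (a*x + d*y + e*z)),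
          mul_nonneg (mul_nonneg ha.le hdet.le) (sq_nonneg z)]
    · have h3 : 0 < a * tdet a b c d e f * z^2 := by
        have : 0 < z^2 := by positivity
        positivity
      nlinarith [mul_nonneg hab.le (sq_nonneg (a*x + d*y + e*z)),
        sq_nonneg ((a*b - d^2)*y + (a*f - d*e)*z)]
  by_contra hTQ
  push_neg at hTQ
  have h4 : a * TQ a b c d e f x y z ≤ 0 := mul_nonpos_of_nonneg_of_nonpos ha.le hTQ
  have h5 := mul_nonpos_of_nonneg_of_nonpos hab.le h4
  linarith

theorem sum3sq_of_4v_sub_1 (v : ℤ) (hv : 0 < v) (hoddv : Odd v) :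
    ∃ x y z : ℤ, x^2 + y^2 + z^2 = 4*v - 1 := by
  obtain ⟨w, hw⟩ := hoddv
  obtain ⟨N, hN⟩ : ∃ N : ℕ, (N : ℤ) = 4*v - 1 :=
    ⟨(4*v - 1).toNat, Int.toNat_of_nonneg (by linarith)⟩
  have hN8 : N % 8 = 3 := by omega
  have hN3 : 3 ≤ N := by omega
  have hNodd : Odd N := by rw [Nat.odd_iff]; omega
  have : NeZero N := ⟨by omega⟩
  -- residue r with 2r + 1 = N
  obtain ⟨r, hr⟩ : ∃ r : ℕ, 2*r + 1 = N := ⟨(N - 1)/2, by omega⟩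
  have hcop : Nat.Coprime r N := by
    have h4 : Nat.gcd r N ∣ 2 * r := (Nat.gcd_dvd_left r N).mul_left 2
    have h5 : Nat.gcd r N ∣ N - 2*r := Nat.dvd_sub (Nat.gcd_dvd_right r N) h4
    have h6 : N - 2*r = 1 := by omega
    rw [h6] at h5
    exact Nat.dvd_one.mp h5
  have hunit : IsUnit ((r : ZMod N)) := (ZMod.isUnit_iff_coprime r N).mpr hcop
  obtain ⟨p, hpN, hpp, hpr⟩ := Nat.forall_exists_prime_gt_and_eq_mod hunit N
  have hFact : Fact p.Prime := ⟨hpp⟩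
  have hpodd : Odd p := hpp.odd_of_ne_two (by omega)
  have hp2 : p % 2 = 1 := Nat.odd_iff.mp hpodd
  have hmod : p % N = r := by
    have h7 : p % N = r % N := (ZMod.natCast_eq_natCast_iff p r N).mp hpr
    have h8 : r % N = r := Nat.mod_eq_of_lt (by omega)
    rw [h8] at h7
    exact h7
  -- N divides 2p + 1
  obtain ⟨Dn, hDn⟩ : N ∣ 2*p + 1 := by
    have h9 : p ≡ r [MOD N] := by
      unfold Nat.ModEq
      rw [hmod, Nat.mod_eq_of_lt (show r < N by omega)]
    have h10 : 2*p + 1 ≡ 2*r + 1 [MOD N] := (h9.mul_left 2).add_right 1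
    rw [hr] at h10
    exact (Nat.modEq_zero_iff_dvd).mp (h10.trans (Nat.modEq_zero_iff_dvd.mpr dvd_rfl))
  have hDn1 : 1 ≤ Dn := by
    rcases Nat.eq_zero_or_pos Dn with h | h
    · rw [h, Nat.mul_zero] at hDn; omega
    · exact h
  -- Jacobi symbol computation : J(-N | p) = 1
  have hJ : jacobiSym (-(N:ℤ)) p = 1 := by
    have hJmul : jacobiSym (-(N:ℤ)) p = jacobiSym (-1) p * jacobiSym (N:ℤ) p := by
      rw [← jacobiSym.mul_left]; norm_num
    have hrec := jacobiSym.quadratic_reciprocity hNodd hpodd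
    have hrodd : Odd (N/2) := by rw [Nat.odd_iff]; omega
    have hpow : ((-1:ℤ))^(N/2 * (p/2)) = (-1)^(p/2) := by
      rw [pow_mul, Odd.neg_one_pow hrodd]
    have hneg1 : jacobiSym (-1) p = (-1)^(p/2) := by
      rw [jacobiSym.at_neg_one hpodd, ZMod.χ₄_eq_neg_one_pow hp2]
    have hpN1 : jacobiSym (p:ℤ) N = jacobiSym (r:ℤ) N := by
      apply jacobiSym.mod_left'
      rw [← Int.natCast_mod, ← Int.natCast_mod, hmod, Nat.mod_eq_of_lt (show r < N by omega)]
    have h2r : jacobiSym 2 N * jacobiSym (r:ℤ) N = jacobiSym (-1) N := by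
      rw [← jacobiSym.mul_left]
      apply jacobiSym.mod_left'
      have h11 : (2*(r:ℤ)) = (N:ℤ) - 1 := by push_cast [← hr]; ring
      have h12 : (-1:ℤ) % (N:ℤ) = ((N:ℤ) - 1) % (N:ℤ) := by
        conv_lhs => rw [show (-1:ℤ) = ((N:ℤ) - 1) + (N:ℤ) * (-1) by ring]
        rw [Int.add_mul_emod_self_left]
      rw [h11, h12]
    have hχ8 : jacobiSym 2 N = -1 := by
      rw [jacobiSym.at_two hNodd, ZMod.χ₈_nat_eq_if_mod_eight]
      rw [if_neg (by omega), if_neg (by omega)]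
    have hχ4 : jacobiSym (-1) N = -1 := by
      rw [jacobiSym.at_neg_one hNodd, ZMod.χ₄_nat_eq_if_mod_four]
      rw [if_neg (by omega), if_neg (by omega)]
    have hrN : jacobiSym (r:ℤ) N = 1 := by
      rw [hχ8, hχ4] at h2r
      linarith
    rw [hJmul, hrec, hpow, hneg1, hpN1, hrN]
    have h12 : ((-1:ℤ))^(p/2) * (-1)^(p/2) = 1 := by
      rw [← pow_add]
      exact Even.neg_one_pow ⟨p/2, by ring⟩
    linear_combination h12
  -- get a square root of -Dn mod p
  have hsqN : IsSquare ((-(N:ℤ) : ℤ) : ZMod p) := ZMod.isSquare_of_jacobiSym_eq_one hJ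
  have hZD : ((N : ZMod p)) * ((Dn : ZMod p)) = 1 := by
    have h13 : ((2*p + 1 : ℕ) : ZMod p) = 1 := by
      push_cast [ZMod.natCast_self]; ring
    rw [hDn] at h13
    push_cast at h13
    exact h13
  have hsqD : IsSquare (-(Dn : ZMod p)) := by
    obtain ⟨s, hs⟩ := hsqN
    push_cast at hs
    refine ⟨s * (Dn : ZMod p), ?_⟩
    calc -(Dn:ZMod p) = -(((N:ZMod p)) * (Dn:ZMod p)) * (Dn:ZMod p) := by rw [hZD]; ring
      _ = (-(N:ZMod p)) * ((Dn:ZMod p) * (Dn:ZMod p)) := by ring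
      _ = (s * s) * ((Dn:ZMod p) * (Dn:ZMod p)) := by rw [← hs]
      _ = (s * (Dn:ZMod p)) * (s * (Dn:ZMod p)) := by ring
  obtain ⟨σ, hσ⟩ := hsqD
  -- lift to ℤ
  obtain ⟨b0, hb0⟩ : ∃ b0 : ℤ, (p:ℤ) ∣ b0^2 + Dn := by
    refine ⟨(σ.val : ℤ), ?_⟩
    rw [← ZMod.intCast_zmod_eq_zero_iff_dvd]
    push_cast
    rw [ZMod.natCast_rightInverse σ]
    rw [sq, ← hσ]
    ring
  -- parity adjustment
  have hxx : ∀ x : ℤ, (2:ℤ) ∣ x^2 - x := by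
    intro x
    rcases Int.even_or_odd x with ⟨k, hk⟩ | ⟨k, hk⟩
    · exact ⟨2*k^2 - k, by rw [hk]; ring⟩
    · exact ⟨2*k^2 + k, by rw [hk]; ring⟩
  obtain ⟨b, hbp, hb2⟩ : ∃ b : ℤ, (p:ℤ) ∣ b^2 + Dn ∧ (2:ℤ) ∣ b^2 + Dn := by
    rcases Int.even_or_odd (b0 + Dn) with he | ho
    · refine ⟨b0, hb0, ?_⟩
      obtain ⟨k, hk⟩ := he
      obtain ⟨j, hj⟩ := hxx b0
      exact ⟨j + k, by linarith [hj, hk]⟩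
    · refine ⟨b0 + p, ?_, ?_⟩
      · obtain ⟨k, hk⟩ := hb0
        exact ⟨k + 2*b0 + p, by linarith [hk]; ⟩
      · obtain ⟨k, hk⟩ := ho
        obtain ⟨j, hj⟩ := hxx (b0 + p)
        obtain ⟨pj, hpj⟩ := hpodd
        refine ⟨j + k + (pj:ℤ) + 1, ?_⟩
        have hpcast : ((p:ℤ)) = 2*(pj:ℤ) + 1 := by exact_mod_cast congrArg (Nat.cast : ℕ → ℤ) hpj
        linarith [hj, hk, hpcast]
  have hcop2 : IsCoprime (2:ℤ) ((p:ℤ)) := by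
    obtain ⟨j, hj⟩ := hpodd
    exact ⟨-(j:ℤ), 1, by push_cast [hj]; ring⟩
  obtain ⟨Cc, hCc⟩ : (2*(p:ℤ)) ∣ b^2 + Dn := hcop2.mul_dvd hb2 hbp
  have hppos : (0:ℤ) < p := by exact_mod_cast hpp.pos
  have hCpos : 0 < Cc := by
    by_contra hCle
    push_neg at hCle
    have h14 : 2*(p:ℤ) * Cc ≤ 0 := mul_nonpos_of_nonneg_of_nonpos (by linarith) hCle
    have h15 : (0:ℤ) < b^2 + Dn := by positivity
    linarith [hCc ▸ h15]
  have hDn2 : 2*(p:ℤ)*Cc - b^2 = Dn := by linarith [hCc]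
  have hND : (N:ℤ) * Dn = 2*(p:ℤ) + 1 := by exact_mod_cast congrArg (Nat.cast : ℕ → ℤ) hDn.symm
  -- assemble the ternary form
  have hdet : tdet Cc (2*(p:ℤ)) (N:ℤ) (-b) 1 0 = 1 := by
    have h16 : tdet Cc (2*(p:ℤ)) (N:ℤ) (-b) 1 0
        = (N:ℤ)*(2*(p:ℤ)*Cc - b^2) - 2*(p:ℤ) := by unfold tdet; ring
    rw [h16, hDn2, hND]
    ring
  have hDnZpos : (0:ℤ) < (Dn:ℤ) := by exact_mod_cast hDn1
  have hposdef := tq_posdef_of_minors Cc (2*(p:ℤ)) (N:ℤ) (-b) 1 0 hCpos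
    (by rw [show Cc * (2*(p:ℤ)) - (-b)^2 = 2*(p:ℤ)*Cc - b^2 by ring, hDn2]; exact hDnZpos)
    (by rw [hdet]; norm_num)
  have hrep : ∃ x y z : ℤ, TQ Cc (2*(p:ℤ)) (N:ℤ) (-b) 1 0 x y z = (N:ℤ) := by
    exact ⟨0, 0, 1, by unfold TQ; ring⟩
  obtain ⟨x, y, z, hxyz⟩ := tq_sum_three_squares Cc (2*(p:ℤ)) (N:ℤ) (-b) 1 0 (N:ℤ)
    hposdef hdet hrep
  exact ⟨x, y, z, by rw [← hN, hxyz]⟩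

lemma all_odd_of_sum3sq (v x y z : ℤ) (hodd : Odd v) (h : x^2 + y^2 + z^2 = 4*v - 1) :
    Odd x ∧ Odd y ∧ Odd z := by
  obtain ⟨w, hw⟩ := hodd
  have hp : ∀ u : ℤ, ∃ t, (u^2 = 4*t ∧ ¬ Odd u) ∨ (u^2 = 8*t + 1 ∧ Odd u) := by
    intro u
    rcases Int.even_or_odd u with he | ho
    · obtain ⟨k, hk⟩ := he
      exact ⟨k^2, Or.inl ⟨by rw [hk]; ring, Int.not_odd_iff_even.mpr ⟨k, hk⟩⟩⟩
    · obtain ⟨k, hk⟩ := ho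
      obtain ⟨t, ht⟩ := Int.even_mul_succ_self k
      exact ⟨t, Or.inr ⟨by rw [hk]; linear_combination 4 * ht, ⟨k, hk⟩⟩⟩
  obtain ⟨tx, hx⟩ := hp x
  obtain ⟨ty, hy⟩ := hp y
  obtain ⟨tz, hz⟩ := hp z
  rcases hx with ⟨hx1, hx2⟩ | ⟨hx1, hx2⟩ <;>
    rcases hy with ⟨hy1, hy2⟩ | ⟨hy1, hy2⟩ <;>
      rcases hz with ⟨hz1, hz2⟩ | ⟨hz1, hz2⟩ <;>
        rw [hx1, hy1, hz1] at h <;>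
          first | exact ⟨hx2, hy2, hz2⟩ | omega

lemma one_le_sq_of_odd (x : ℤ) (h : Odd x) : 1 ≤ x^2 := by
  have hne : x ≠ 0 := by rintro rfl; simpa using h
  have h1 := Int.one_le_abs hne
  nlinarith [sq_abs x, abs_nonneg x]

lemma mk_k (v x : ℤ) (hv : 0 < v) (hoddv : Odd v) (hox : Odd x) (hsq : x^2 ≤ v^2) :
    ∃ k : ℤ, 0 ≤ k ∧ k ≤ (v-1)/2 ∧ (v - 2*k)^2 = x^2 := by
  have habs : |x| ≤ v := by
    by_contra hc
    push_neg at hc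
    have h1 : v + 1 ≤ |x| := hc
    have h2 : (v+1)*(v+1) ≤ |x| * |x| := mul_self_le_mul_self (by linarith) h1
    nlinarith [sq_abs x]
  have hxo : Odd |x| := by
    rcases abs_choice x with h | h <;> rw [h]
    · exact hox
    · exact hox.neg
  have hne : x ≠ 0 := by rintro rfl; simpa using hox
  have h1abs : 1 ≤ |x| := Int.one_le_abs hne
  obtain ⟨k, hk⟩ := hoddv.sub_odd hxo
  refine ⟨k, by omega, by omega, ?_⟩
  rw [show v - 2*k = |x| by omega, sq_abs]

lemma sort3 (M n v ka kb kc sa sb sc : ℤ)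
    (ha : 0 ≤ ka ∧ ka ≤ M) (hb : 0 ≤ kb ∧ kb ≤ M) (hc : 0 ≤ kc ∧ kc ≤ M)
    (hva : (v - 2*ka)^2 = sa) (hvb : (v - 2*kb)^2 = sb) (hvc : (v - 2*kc)^2 = sc)
    (hsum : sa + sb + sc = n) :
    ∃ k2 k3 k4 : ℤ, 0 ≤ k4 ∧ k4 ≤ k3 ∧ k3 ≤ k2 ∧ k2 ≤ M ∧
      (v - 2*k2)^2 + (v - 2*k3)^2 + (v - 2*k4)^2 = n := by
  rcases le_total ka kb with h1 | h1
  · rcases le_total kb kc with h2 | h2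
    · exact ⟨kc, kb, ka, ha.1, h1, h2, hc.2, by linarith⟩
    · rcases le_total ka kc with h3 | h3
      · exact ⟨kb, kc, ka, ha.1, h3, h2, hb.2, by linarith⟩
      · exact ⟨kb, ka, kc, hc.1, h3, h1, hb.2, by linarith⟩
  · rcases le_total ka kc with h2 | h2
    · exact ⟨kc, ka, kb, hb.1, h1, h2, hc.2, by linarith⟩
    · rcases le_total kb kc with h3 | h3
      · exact ⟨ka, kc, kb, hb.1, h3, h2, ha.2, by linarith⟩
      · exact ⟨ka, kb, kc, hc.1, h3, h1, ha.2, by linarith⟩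

theorem gs_ksss_params_exist (v : ℤ) (hv : 0 < v) (hodd : Odd v) :
    ∃ k2 k3 k4 : ℤ, 0 ≤ k4 ∧ k4 ≤ k3 ∧ k3 ≤ k2 ∧ k2 ≤ (v - 1) / 2 ∧
      (v - 2 * k2) ^ 2 + (v - 2 * k3) ^ 2 + (v - 2 * k4) ^ 2 = 4 * v - 1 := by
  obtain ⟨x, y, z, hsum⟩ := sum3sq_of_4v_sub_1 v hv hodd
  obtain ⟨hox, hoy, hoz⟩ := all_odd_of_sum3sq v x y z hodd hsum
  have h1x := one_le_sq_of_odd x hox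
  have h1y := one_le_sq_of_odd y hoy
  have h1z := one_le_sq_of_odd z hoz
  have hvv : 4*v - 3 ≤ v^2 := by
    obtain ⟨w, hw⟩ := hodd
    have hw0 : 0 ≤ w := by omega
    have : 0 ≤ w*(w-1) := by
      rcases le_or_gt 1 w with h | h
      · nlinarith
      · nlinarith
    nlinarith
  have hxv : x^2 ≤ v^2 := by linarith
  have hyv : y^2 ≤ v^2 := by linarith
  have hzv : z^2 ≤ v^2 := by linarith
  obtain ⟨ka, hka0, hkaM, hkav⟩ := mk_k v x hv hodd hox hxv
  obtain ⟨kb, hkb0, hkbM, hkbv⟩ := mk_k v y hv hodd hoy hyv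
  obtain ⟨kc, hkc0, hkcM, hkcv⟩ := mk_k v z hv hodd hoz hzv
  obtain ⟨k2, k3, k4, h4, h43, h32, h2M, hfin⟩ :=
    sort3 ((v-1)/2) (4*v - 1) v ka kb kc (x^2) (y^2) (z^2)
      ⟨hka0, hkaM⟩ ⟨hkb0, hkbM⟩ ⟨hkc0, hkcM⟩ hkav hkbv hkcv hsum
  exact ⟨k2, k3, k4, h4, h43, h32, h2M, by linarith [hfin]⟩
end

section
/- Let v ≥ 3 be an odd integer. There exist integers k₃, k₄, λ with (v−1)/2 ≥ k₃ ≥ k₄ ≥ 0 and λ ≥ 0 such that (v; (v−1)/2, (v−1)/2, k₃, k₄; λ) satisfies both ∑ᵢ kᵢ(kᵢ−1) = λ(v−1) and ∑ᵢ kᵢ = λ + v, if and only if 2v − 1 is a sum of two squares. -/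
lemma gs_aux (m a b : ℤ) (hm : 1 ≤ m) (hb : 0 ≤ b) (hba : b ≤ a)
    (hsum : a ^ 2 + b ^ 2 = 2 * (2 * m + 1) - 1) :
    ∃ k3 k4 lam : ℤ, m ≥ k3 ∧ k3 ≥ k4 ∧ k4 ≥ 0 ∧ lam ≥ 0 ∧
      2 * (m * (m - 1)) + k3 * (k3 - 1) + k4 * (k4 - 1) = lam * (2 * m + 1 - 1) ∧
      m + m + k3 + k4 = lam + (2 * m + 1) := by
  -- a + b is odd
  have hoddsq : Odd ((a + b) ^ 2) := ⟨2 * m + a * b, by linear_combination hsum⟩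
  have hoddab : Odd (a + b) :=
    (Int.odd_pow.mp hoddsq).resolve_right (by norm_num)
  obtain ⟨t, ht⟩ := hoddab
  -- a + b ≤ 2m + 1
  have hab : a + b ≤ 2 * m + 1 := by
    by_contra h
    push_neg at h
    have h' : 2 * m + 3 ≤ a + b := by omega
    have h1 : (a + b) ^ 2 ≤ 8 * m + 2 := by nlinarith [sq_nonneg (a - b)]
    have h2 : (2 * m + 3) ^ 2 ≤ (a + b) ^ 2 :=
      pow_le_pow_left₀ (by linarith) h' 2
    nlinarith
  -- a ≤ 2m
  have ha2m : a ≤ 2 * m := by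
    by_contra h
    push_neg at h
    have h' : 2 * m + 1 ≤ a := by omega
    have h2 : (2 * m + 1) ^ 2 ≤ a ^ 2 := pow_le_pow_left₀ (by linarith) h' 2
    nlinarith [sq_nonneg b]
  obtain ⟨K3, hK3⟩ : ∃ K, 2 * K = 2 * m + 1 - a + b := ⟨(2 * m + 1 - a + b) / 2, by omega⟩
  obtain ⟨K4, hK4⟩ : ∃ K, 2 * K = 2 * m + 1 - a - b := ⟨(2 * m + 1 - a - b) / 2, by omega⟩
  refine ⟨K3, K4, K3 + K4 - 1, by omega, by omega, by omega, by omega, ?_, by omega⟩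
  have ha : a = 2 * m + 1 - K3 - K4 := by omega
  have hb' : b = K3 - K4 := by omega
  rw [ha, hb'] at hsum
  have h2x : 2 * (2 * (m * (m - 1)) + K3 * (K3 - 1) + K4 * (K4 - 1))
      = 2 * ((K3 + K4 - 1) * (2 * m + 1 - 1)) := by linear_combination hsum
  exact mul_left_cancel₀ two_ne_zero h2x

theorem gs_kkss_params_iff (v : ℤ) (hv : 3 ≤ v) (hodd : Odd v) :
    (∃ k3 k4 lam : ℤ, (v - 1) / 2 ≥ k3 ∧ k3 ≥ k4 ∧ k4 ≥ 0 ∧ lam ≥ 0 ∧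
        2 * ((v - 1) / 2 * ((v - 1) / 2 - 1)) + k3 * (k3 - 1) + k4 * (k4 - 1)
          = lam * (v - 1) ∧
        (v - 1) / 2 + (v - 1) / 2 + k3 + k4 = lam + v) ↔
      ∃ r s : ℤ, r ^ 2 + s ^ 2 = 2 * v - 1 := by
  obtain ⟨m, hm⟩ := hodd
  subst hm
  have hm1 : 1 ≤ m := by omega
  have hdiv : (2 * m + 1 - 1) / 2 = m := by omega
  rw [hdiv]
  constructor
  · rintro ⟨k3, k4, lam, -, -, -, -, h1, h2⟩
    exact ⟨2 * m + 1 - k3 - k4, k4 - k3, by linear_combination 2 * h1 - 4 * m * h2⟩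
  · rintro ⟨r, s, hrs⟩
    rcases le_total |s| |r| with h | h
    · exact gs_aux m |r| |s| hm1 (abs_nonneg s) h
        (by rw [sq_abs, sq_abs]; linear_combination hrs)
    · exact gs_aux m |s| |r| hm1 (abs_nonneg r) h
        (by rw [sq_abs, sq_abs]; linear_combination hrs)
end

section
/- Let A₁, A₂, A₃, A₄ be circulant {±1}-matrices of order v satisfying ∑ᵢ₌₁⁴ AᵢᵀAᵢ = 4v·I_v, and let R be the back-circulant identity matrix of order v (R_{i,j} = 1 iff i + j ≡ v − 1 mod v, else 0). Then the 4v × 4v Goethals–Seidel array H with block rows (A₁, A₂R, A₃R, A₄R), (−A₂R, A₁, −A₄ᵀR, A₃ᵀR), (−A₃R, A₄ᵀR, A₁, −A₂ᵀR), (−A₄R, −A₃ᵀR, A₂ᵀR, A₁) satisfies H·Hᵀ = 4v·I_{4v}, i.e. H is a Hadamard matrix of order 4v. -/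
open Matrix

variable {v : ℕ} [NeZero v]

def IsCirc (M : Matrix (ZMod v) (ZMod v) ℤ) : Prop :=
  ∃ x : ZMod v → ℤ, M = Matrix.of fun a b => x (b - a)

lemma IsCirc.transpose {M : Matrix (ZMod v) (ZMod v) ℤ} (h : IsCirc M) : IsCirc Mᵀ := by
  obtain ⟨x, rfl⟩ := h
  exact ⟨fun t => x (-t), by ext a b; simp [Matrix.transpose_apply, neg_sub]⟩

lemma IsCirc.mul_comm {M N : Matrix (ZMod v) (ZMod v) ℤ} (hM : IsCirc M) (hN : IsCirc N) :
    M * N = N * M := by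
  obtain ⟨x, rfl⟩ := hM
  obtain ⟨y, rfl⟩ := hN
  ext a b
  simp only [Matrix.mul_apply, Matrix.of_apply]
  apply Fintype.sum_equiv (Equiv.subLeft (a + b))
  intro k
  have h1 : a + b - k - a = b - k := by ring
  have h2 : b - (a + b - k) = k - a := by ring
  rw [Equiv.subLeft_apply, h1, h2]; ring

lemma R_eq {R : Matrix (ZMod v) (ZMod v) ℤ}
    (hR : R = Matrix.of fun i j => if i + j = (v : ZMod v) - 1 then (1 : ℤ) else 0) :
    R = Matrix.of fun i j => if j = -1 - i then (1 : ℤ) else 0 := by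
  rw [hR]; ext i j
  simp only [Matrix.of_apply, ZMod.natCast_self, zero_sub]
  apply if_congr _ rfl rfl
  rw [eq_sub_iff_add_eq, add_comm j i]

lemma Rsym {R : Matrix (ZMod v) (ZMod v) ℤ}
    (hR : R = Matrix.of fun i j => if i + j = (v : ZMod v) - 1 then (1 : ℤ) else 0) :
    Rᵀ = R := by
  rw [hR]; ext i j
  simp only [Matrix.transpose_apply, Matrix.of_apply, add_comm j i]

lemma R_mul_R {R : Matrix (ZMod v) (ZMod v) ℤ}
    (hR : R = Matrix.of fun i j => if i + j = (v : ZMod v) - 1 then (1 : ℤ) else 0) :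
    R * R = 1 := by
  rw [R_eq hR]; ext a b
  simp only [Matrix.mul_apply, Matrix.of_apply, ite_mul, one_mul, zero_mul,
    Finset.sum_ite_eq', Finset.mem_univ, if_true, Matrix.one_apply]
  have h : (-1 : ZMod v) - (-1 - a) = a := by ring
  rw [h]
  simp only [eq_comm]

lemma R_mul_circ {R M : Matrix (ZMod v) (ZMod v) ℤ}
    (hR : R = Matrix.of fun i j => if i + j = (v : ZMod v) - 1 then (1 : ℤ) else 0)
    (hM : IsCirc M) : R * M = Mᵀ * R := by
  obtain ⟨x, rfl⟩ := hM
  rw [R_eq hR]; ext a b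
  have hiff : ∀ k : ZMod v, (b = -1 - k) ↔ (k = -1 - b) := by
    intro k; constructor <;> intro h <;> rw [h] <;> ring
  simp only [Matrix.mul_apply, Matrix.of_apply, Matrix.transpose_apply, hiff, ite_mul, mul_ite,
    one_mul, mul_one, zero_mul, mul_zero, Finset.sum_ite_eq', Finset.mem_univ, if_true]
  congr 1
  ring

lemma symmR {R M : Matrix (ZMod v) (ZMod v) ℤ}
    (hR : R = Matrix.of fun i j => if i + j = (v : ZMod v) - 1 then (1 : ℤ) else 0)
    (hM : IsCirc M) : (M * R)ᵀ = M * R := by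
  rw [Matrix.transpose_mul, Rsym hR, R_mul_circ hR hM.transpose, Matrix.transpose_transpose]

lemma prodRR {R : Matrix (ZMod v) (ZMod v) ℤ}
    (hR : R = Matrix.of fun i j => if i + j = (v : ZMod v) - 1 then (1 : ℤ) else 0)
    (C D : Matrix (ZMod v) (ZMod v) ℤ) : (C * R) * (D * R)ᵀ = C * Dᵀ := by
  rw [Matrix.transpose_mul, Rsym hR, mul_assoc, ← mul_assoc R, R_mul_R hR, one_mul]

lemma prodNR {R D : Matrix (ZMod v) (ZMod v) ℤ}
    (hR : R = Matrix.of fun i j => if i + j = (v : ZMod v) - 1 then (1 : ℤ) else 0)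
    (hD : IsCirc D) (C : Matrix (ZMod v) (ZMod v) ℤ) : C * (D * R)ᵀ = C * D * R := by
  rw [symmR hR hD, ← mul_assoc]

lemma prodRN {R D : Matrix (ZMod v) (ZMod v) ℤ}
    (hR : R = Matrix.of fun i j => if i + j = (v : ZMod v) - 1 then (1 : ℤ) else 0)
    (hD : IsCirc D) (C : Matrix (ZMod v) (ZMod v) ℤ) : (C * R) * Dᵀ = C * D * R := by
  rw [mul_assoc, R_mul_circ hR hD.transpose, Matrix.transpose_transpose, ← mul_assoc]

theorem goethals_seidel_hadamard (v : ℕ) [NeZero v]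
    (A : Fin 4 → Matrix (ZMod v) (ZMod v) ℤ)
    (hcirc : ∀ i, ∃ x : ZMod v → ℤ, (∀ j, x j = 1 ∨ x j = -1) ∧
      A i = Matrix.of fun a b => x (b - a))
    (hsum : ∑ i, (A i)ᵀ * A i = (4 * (v : ℤ)) • (1 : Matrix (ZMod v) (ZMod v) ℤ))
    (R : Matrix (ZMod v) (ZMod v) ℤ)
    (hR : R = Matrix.of fun i j => if i + j = (v : ZMod v) - 1 then (1 : ℤ) else 0)
    (B : Fin 4 → Fin 4 → Matrix (ZMod v) (ZMod v) ℤ)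
    (hB : B = ![![A 0, A 1 * R, A 2 * R, A 3 * R],
                ![-(A 1 * R), A 0, -((A 3)ᵀ * R), (A 2)ᵀ * R],
                ![-(A 2 * R), (A 3)ᵀ * R, A 0, -((A 1)ᵀ * R)],
                ![-(A 3 * R), -((A 2)ᵀ * R), (A 1)ᵀ * R, A 0]])
    (H : Matrix (Fin 4 × ZMod v) (Fin 4 × ZMod v) ℤ)
    (hH : H = Matrix.of fun p q => B p.1 q.1 p.2 q.2) :
    H * Hᵀ = (4 * (v : ℤ)) • (1 : Matrix (Fin 4 × ZMod v) (Fin 4 × ZMod v) ℤ) := by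
  have hc : ∀ i, IsCirc (A i) := fun i => (hcirc i).imp fun x hx => hx.2
  have hct : ∀ i, IsCirc (A i)ᵀ := fun i => (hc i).transpose
  have comm : ∀ M N : Matrix (ZMod v) (ZMod v) ℤ, IsCirc M → IsCirc N → M * N = N * M :=
    fun M N hM hN => hM.mul_comm hN
  obtain ⟨S, hS⟩ : ∃ S, S = (4 * (v : ℤ)) • (1 : Matrix (ZMod v) (ZMod v) ℤ) := ⟨_, rfl⟩
  have key : ∀ i j : Fin 4, ∑ k, B i k * (B j k)ᵀ = if i = j then S else 0 := by
    have hsum4 : (A 0)ᵀ * A 0 + (A 1)ᵀ * A 1 + (A 2)ᵀ * A 2 + (A 3)ᵀ * A 3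
        = (4 * (v : ℤ)) • (1 : Matrix (ZMod v) (ZMod v) ℤ) := by
      rw [← hsum, Fin.sum_univ_four]
    have pR2 : ∀ C : Matrix (ZMod v) (ZMod v) ℤ, C * R * R = C := fun C => by
      rw [mul_assoc, R_mul_R hR, mul_one]
    intro i j
    fin_cases i <;> fin_cases j <;>
      simp [hB, Fin.sum_univ_four, Matrix.transpose_neg, Matrix.neg_mul, Matrix.mul_neg,
        neg_neg, -Matrix.transpose_mul] <;>
      simp only [prodRR hR, prodNR hR (hc 0), prodNR hR (hc 1), prodNR hR (hc 2),
        prodNR hR (hc 3), prodNR hR (hct 0), prodNR hR (hct 1), prodNR hR (hct 2),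
        prodNR hR (hct 3), prodRN hR (hc 0), prodRN hR (hc 1), prodRN hR (hc 2),
        prodRN hR (hc 3), prodRN hR (hct 0), prodRN hR (hct 1), prodRN hR (hct 2),
        prodRN hR (hct 3), pR2, Matrix.transpose_transpose]
    · rw [comm (A 0) (A 0)ᵀ (hc 0) (hct 0), comm (A 1) (A 1)ᵀ (hc 1) (hct 1),
        comm (A 2) (A 2)ᵀ (hc 2) (hct 2), comm (A 3) (A 3)ᵀ (hc 3) (hct 3), hS, ← hsum4]
    · rw [comm (A 1) (A 0) (hc 1) (hc 0), comm (A 3) (A 2) (hc 3) (hc 2)]; abel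
    · rw [comm (A 2) (A 0) (hc 2) (hc 0), comm (A 3) (A 1) (hc 3) (hc 1)]; abel
    · rw [comm (A 3) (A 0) (hc 3) (hc 0), comm (A 2) (A 1) (hc 2) (hc 1)]; abel
    · rw [comm (A 1) (A 0) (hc 1) (hc 0), comm (A 3)ᵀ (A 2)ᵀ (hct 3) (hct 2)]; abel
    · rw [comm (A 1) (A 1)ᵀ (hc 1) (hct 1), comm (A 0) (A 0)ᵀ (hc 0) (hct 0), hS, ← hsum4]
      abel
    · rw [comm (A 1) (A 2)ᵀ (hc 1) (hct 2), comm (A 0) (A 3)ᵀ (hc 0) (hct 3)]; abel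
    · rw [comm (A 1) (A 3)ᵀ (hc 1) (hct 3), comm (A 0) (A 2)ᵀ (hc 0) (hct 2)]; abel
    · rw [comm (A 2) (A 0) (hc 2) (hc 0), comm (A 3)ᵀ (A 1)ᵀ (hct 3) (hct 1)]; abel
    · rw [comm (A 2) (A 1)ᵀ (hc 2) (hct 1), comm (A 3)ᵀ (A 0) (hct 3) (hc 0)]; abel
    · rw [comm (A 2) (A 2)ᵀ (hc 2) (hct 2), comm (A 0) (A 0)ᵀ (hc 0) (hct 0), hS, ← hsum4]
      abel
    · rw [comm (A 2) (A 3)ᵀ (hc 2) (hct 3), comm (A 0) (A 1)ᵀ (hc 0) (hct 1)]; abel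
    · rw [comm (A 0) (A 3) (hc 0) (hc 3), comm (A 2)ᵀ (A 1)ᵀ (hct 2) (hct 1)]; abel
    · rw [comm (A 3) (A 1)ᵀ (hc 3) (hct 1), comm (A 0) (A 2)ᵀ (hc 0) (hct 2)]; abel
    · rw [comm (A 3) (A 2)ᵀ (hc 3) (hct 2), comm (A 0) (A 1)ᵀ (hc 0) (hct 1)]; abel
    · rw [comm (A 3) (A 3)ᵀ (hc 3) (hct 3), comm (A 0) (A 0)ᵀ (hc 0) (hct 0), hS, ← hsum4]; abel
  ext ⟨i, a⟩ ⟨j, b⟩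
  have hentry : (H * Hᵀ) (i, a) (j, b) = (∑ k, B i k * (B j k)ᵀ) a b := by
    rw [Matrix.mul_apply, Fintype.sum_prod_type]
    simp only [Matrix.sum_apply, Matrix.mul_apply, Matrix.transpose_apply, hH, Matrix.of_apply]
  rw [hentry, key i j, hS]
  by_cases h : i = j <;>
    simp [h, Matrix.one_apply, Prod.ext_iff, Matrix.smul_apply, Matrix.zero_apply]
end
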